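/- Let V be a TRO with linking C*-algebra A(V), and let θ : Id(V) → Id(A(V)) be the canonical lattice isomorphism I ↦ A(I). Then a closed ideal P of V is primal (meaning: whenever closed ideals J₁,…,J_{2n+1} of V satisfy J₁J₂⋯J_{2n+1} = {0}, at least one J_k ⊆ P) if and only if A(P) is a primal ideal of the C*-algebra A(V) (meaning: whenever closed ideals K₁,…,K_m of A(V) satisfy K₁⋯K_m = {0}, some K_j ⊆ A(P)). -/

import Mathlib

/-!
Statement 0: In a TRO `V ⊆ B(H,K)`, the closed linear span of products
`I₁ I₂* I₃ ⋯ I_{2n+1}` of closed ideals equals their intersection.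
-/

open ContinuousLinearMap

variable {H K : Type*} [NormedAddCommGroup H] [InnerProductSpace ℂ H] [CompleteSpace H]
  [NormedAddCommGroup K] [InnerProductSpace ℂ K] [CompleteSpace K]

/-- The ternary product `x y* z` of operators in `B(H, K)`. -/
noncomputable def tp (x y z : H →L[ℂ] K) : H →L[ℂ] K :=
  (x.comp (ContinuousLinearMap.adjoint y)).comp z

/-- A TRO: a norm-closed subspace of `B(H,K)` closed under the ternary product. -/
def IsTRO (V : Submodule ℂ (H →L[ℂ] K)) : Prop :=
  IsClosed (V : Set (H →L[ℂ] K)) ∧ ∀ x ∈ V, ∀ y ∈ V, ∀ z ∈ V, tp x y z ∈ V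

/-- A closed ideal of the TRO `V`: a closed subspace `I ⊆ V` with
`I V* V + V V* I ⊆ I`. -/
def IsTROIdeal (V I : Submodule ℂ (H →L[ℂ] K)) : Prop :=
  I ≤ V ∧ IsClosed (I : Set (H →L[ℂ] K)) ∧
    (∀ a ∈ I, ∀ y ∈ V, ∀ z ∈ V, tp a y z ∈ I) ∧
    (∀ x ∈ V, ∀ y ∈ V, ∀ a ∈ I, tp x y a ∈ I)

/-- The alternating product `a₀ a₁* a₂ a₃* ⋯ a_{2n}` of `2n+1` operators. -/
noncomputable def altProd : (n : ℕ) → (Fin (2 * n + 1) → (H →L[ℂ] K)) → (H →L[ℂ] K)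
  | 0, a => a 0
  | n + 1, a =>
      tp (altProd n fun i => a ⟨i.1, by have := i.isLt; omega⟩)
        (a ⟨2 * n + 1, by omega⟩) (a ⟨2 * n + 2, by omega⟩)

/-- The product of an odd family of ideals: the closed linear span of the
alternating products `a₁ a₂* a₃ ⋯ a_{2n+1}` with `a_k ∈ I_k`. -/
noncomputable def oddProdIdeal (n : ℕ) (J : Fin (2 * n + 1) → Submodule ℂ (H →L[ℂ] K)) :
    Submodule ℂ (H →L[ℂ] K) :=
  (Submodule.span ℂ
      {x | ∃ a : Fin (2 * n + 1) → (H →L[ℂ] K),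
        (∀ i, a i ∈ J i) ∧ x = altProd n a}).topologicalClosure

/-- A closed ideal `P` of the TRO `V` is primal if whenever closed ideals
`J₁, …, J_{2n+1}` of `V` have zero product, some `J_k ⊆ P`. -/
def IsTROPrimal (V P : Submodule ℂ (H →L[ℂ] K)) : Prop :=
  IsTROIdeal V P ∧ ∀ (n : ℕ) (J : Fin (2 * n + 1) → Submodule ℂ (H →L[ℂ] K)),
    (∀ i, IsTROIdeal V (J i)) → oddProdIdeal n J = ⊥ → ∃ i, J i ≤ P

variable {A : Type*} [NonUnitalNormedRing A] [StarRing A] [CStarRing A]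
  [NormedSpace ℂ A] [IsScalarTower ℂ A A] [SMulCommClass ℂ A A] [StarModule ℂ A]
  [CompleteSpace A]

/-- A closed (two-sided) ideal of the C*-algebra `A`. -/
def IsCIdeal (L : Submodule ℂ A) : Prop :=
  IsClosed (L : Set A) ∧ ∀ a : A, ∀ x ∈ L, a * x ∈ L ∧ x * a ∈ L

/-- The product `a₀ a₁ ⋯ a_m` of `m+1` elements of `A`. -/
noncomputable def mulProd : (m : ℕ) → (Fin (m + 1) → A) → A
  | 0, a => a 0
  | m + 1, a => mulProd m (fun i => a i.castSucc) * a (Fin.last (m + 1))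

/-- The product of finitely many ideals of `A`: the closed linear span of the
products of their elements. -/
noncomputable def mulProdIdeal (m : ℕ) (L : Fin (m + 1) → Submodule ℂ A) :
    Submodule ℂ A :=
  (Submodule.span ℂ
      {x | ∃ a : Fin (m + 1) → A, (∀ i, a i ∈ L i) ∧ x = mulProd m a}).topologicalClosure

/-- A closed ideal `P` of the C*-algebra `A` is primal if whenever finitely many
closed ideals of `A` have zero product, one of them is contained in `P`. -/
def IsCPrimal (P : Submodule ℂ A) : Prop :=
  IsCIdeal P ∧ ∀ (m : ℕ) (L : Fin (m + 1) → Submodule ℂ A),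
    (∀ i, IsCIdeal (L i)) → mulProdIdeal m L = ⊥ → ∃ i, L i ≤ P

section Aux

open ContinuousLinearMap

/-- The alternating product of elements of `V` lies in `V`. -/
lemma altProd_mem_of_TRO {V : Submodule ℂ (H →L[ℂ] K)} (hV : IsTRO V) :
    ∀ (n : ℕ) (a : Fin (2 * n + 1) → (H →L[ℂ] K)), (∀ i, a i ∈ V) → altProd n a ∈ V
  | 0, a, ha => ha 0
  | n + 1, a, ha => by
    exact hV.2 _ (altProd_mem_of_TRO hV n _ fun i => ha _) _ (ha _) _ (ha _)

/-- Even-slot membership: the alternating product lies in every even-indexed ideal. -/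
lemma altProd_mem_even {V : Submodule ℂ (H →L[ℂ] K)} (hV : IsTRO V) :
    ∀ (n : ℕ) (J : Fin (2 * n + 1) → Submodule ℂ (H →L[ℂ] K)),
      (∀ i, IsTROIdeal V (J i)) →
      ∀ (a : Fin (2 * n + 1) → (H →L[ℂ] K)), (∀ i, a i ∈ J i) →
      ∀ (t : ℕ) (ht : 2 * t < 2 * n + 1), altProd n a ∈ J ⟨2 * t, ht⟩
  | 0, J, hJ, a, ha, t, ht => by
    have h0 : t = 0 := by omega
    subst h0
    simpa [altProd] using ha ⟨0, by omega⟩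
  | n + 1, J, hJ, a, ha, t, ht => by
    have hmemV : ∀ i, a i ∈ V := fun i => (hJ i).1 (ha i)
    by_cases hc : 2 * t < 2 * n + 1
    · -- use the first-slot ideal property
      have hX := altProd_mem_even hV n (fun i => J ⟨i.1, by omega⟩)
        (fun i => hJ _) (fun i => a ⟨i.1, by omega⟩) (fun i => ha _) t hc
      show tp _ _ _ ∈ _
      have : J (⟨2 * t, ht⟩ : Fin (2 * (n+1) + 1)) =
          J ⟨(⟨2*t, hc⟩ : Fin (2*n+1)).1, by omega⟩ := rfl
      rw [this]
      exact (hJ _).2.2.1 _ hX _ (hmemV _) _ (hmemV _)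
    · -- last slot: use the third-slot ideal property
      have h2 : 2 * t = 2 * n + 2 := by omega
      have hEq : (⟨2 * t, ht⟩ : Fin (2 * (n+1) + 1)) = ⟨2 * n + 2, by omega⟩ :=
        Fin.ext (by simpa using h2)
      rw [hEq]
      exact (hJ _).2.2.2 _ (altProd_mem_of_TRO hV n _ fun i => hmemV _) _ (hmemV _)
        _ (ha ⟨2 * n + 2, by omega⟩)

/-- The alternating product of the constant family. -/
lemma altProd_const (a : H →L[ℂ] K) :
    ∀ n : ℕ, altProd n (fun _ : Fin (2 * n + 1) => a) = a ∘L ((adjoint a ∘L a) ^ n)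
  | 0 => by simp [altProd, ContinuousLinearMap.one_def]
  | n + 1 => by
    show tp (altProd n (fun _ : Fin (2 * n + 1) => a)) a a = _
    rw [altProd_const a n, tp, pow_succ, mul_def]
    simp only [comp_assoc]

lemma sa_pow_two_pow_norm {b : H →L[ℂ] H} (hb : IsSelfAdjoint b) :
    ∀ k : ℕ, ‖b ^ (2 ^ k)‖ = ‖b‖ ^ (2 ^ k)
  | 0 => by simp
  | k + 1 => by
    have hsa : IsSelfAdjoint (b ^ (2 ^ k)) := hb.pow _
    have h2 : 2 ^ (k + 1) = 2 ^ k + 2 ^ k := by rw [pow_succ, mul_two]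
    rw [h2, pow_add]
    have key : ‖b ^ 2 ^ k * b ^ 2 ^ k‖ = ‖b ^ 2 ^ k‖ * ‖b ^ 2 ^ k‖ := by
      nth_rewrite 1 [← hsa.star_eq]
      exact CStarRing.norm_star_mul_self
    rw [key, sa_pow_two_pow_norm hb k, ← pow_add]

lemma sa_nilpotent_eq_zero {b : H →L[ℂ] H} (hb : IsSelfAdjoint b) {m : ℕ}
    (h : b ^ (m + 1) = 0) : b = 0 := by
  have hle : m + 1 ≤ 2 ^ (m + 1) := (Nat.lt_two_pow_self (n := m + 1)).le
  have hz : b ^ (2 ^ (m + 1)) = 0 := by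
    rw [show 2 ^ (m + 1) = (m + 1) + (2 ^ (m + 1) - (m + 1)) by omega, pow_add, h, zero_mul]
  have := sa_pow_two_pow_norm hb (m + 1)
  rw [hz, norm_zero] at this
  have : ‖b‖ = 0 := pow_eq_zero_iff (by positivity) |>.mp this.symm
  exact norm_eq_zero.mp this

/-- If the constant alternating product vanishes, the element is zero. -/
lemma eq_zero_of_altProd_const (a : H →L[ℂ] K) (n : ℕ)
    (h : altProd n (fun _ : Fin (2 * n + 1) => a) = 0) : a = 0 := by
  rw [altProd_const a n] at h
  set b : H →L[ℂ] H := adjoint a ∘L a with hbdef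
  have hb : IsSelfAdjoint b := by
    rw [IsSelfAdjoint, star_eq_adjoint, hbdef, adjoint_comp, adjoint_adjoint]
  have hbn : b ^ (n + 1) = 0 := by
    have : b ^ (n + 1) = adjoint a ∘L (a ∘L b ^ n) := by
      rw [pow_succ', mul_def, hbdef]
      simp only [comp_assoc]
    rw [this, h, comp_zero]
  have hb0 : b = 0 := sa_nilpotent_eq_zero hb hbn
  ext x
  have hinner : (inner ℂ (a x) (a x) : ℂ) = 0 := by
    rw [← adjoint_inner_left]
    show (inner ℂ ((adjoint a ∘L a) x) x : ℂ) = 0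
    rw [← hbdef, hb0]
    simp
  simpa using inner_self_eq_zero.mp hinner

/-- `⊥` is a TRO ideal. -/
lemma isTROIdeal_bot (V : Submodule ℂ (H →L[ℂ] K)) : IsTROIdeal V ⊥ := by
  refine ⟨bot_le, by simp [Submodule.bot_coe, isClosed_singleton], ?_, ?_⟩
  · intro a ha y _ z _
    rw [Submodule.mem_bot] at ha ⊢
    rw [ha, tp]; simp
  · intro x _ y _ a ha
    rw [Submodule.mem_bot] at ha ⊢
    rw [ha, tp]; simp

/-- `V` is a TRO ideal of itself. -/
lemma isTROIdeal_self {V : Submodule ℂ (H →L[ℂ] K)} (hV : IsTRO V) : IsTROIdeal V V :=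
  ⟨le_refl _, hV.1, fun a ha y hy z hz => hV.2 a ha y hy z hz,
    fun x hx y hy a ha => hV.2 x hx y hy a ha⟩

/-- The infimum of a (nonempty) family of TRO ideals is a TRO ideal. -/
lemma isTROIdeal_iInf {V : Submodule ℂ (H →L[ℂ] K)} {n : ℕ}
    {J : Fin (n + 1) → Submodule ℂ (H →L[ℂ] K)} (hJ : ∀ i, IsTROIdeal V (J i)) :
    IsTROIdeal V (⨅ i, J i) := by
  refine ⟨le_trans (iInf_le J 0) (hJ 0).1, ?_, ?_, ?_⟩
  · rw [Submodule.coe_iInf]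
    exact isClosed_iInter fun i => (hJ i).2.1
  · intro a ha y hy z hz
    rw [Submodule.mem_iInf] at ha ⊢
    exact fun i => (hJ i).2.2.1 _ (ha i) _ hy _ hz
  · intro x hx y hy a ha
    rw [Submodule.mem_iInf] at ha ⊢
    exact fun i => (hJ i).2.2.2 _ hx _ hy _ (ha i)

/-- `⊥` is a C*-ideal. -/
lemma isCIdeal_bot : IsCIdeal (⊥ : Submodule ℂ A) := by
  refine ⟨by simp [Submodule.bot_coe, isClosed_singleton], ?_⟩
  intro a x hx
  rw [Submodule.mem_bot] at hx
  subst hx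
  simp

end Aux

/-- under the canonical lattice isomorphism `θ = 𝒜(·)` between the
closed ideals of a TRO `V` and those of its linking C*-algebra `A = 𝒜(V)`,
a closed ideal `P` of `V` is primal iff `θ P` is primal in `A`. -/
theorem statement1 (V : Submodule ℂ (H →L[ℂ] K)) (hV : IsTRO V)
    (θ : Submodule ℂ (H →L[ℂ] K) → Submodule ℂ A)
    (hmaps : ∀ I, IsTROIdeal V I → IsCIdeal (θ I))
    (hsurj : ∀ L, IsCIdeal L → ∃ I, IsTROIdeal V I ∧ θ I = L)
    (horder : ∀ I J, IsTROIdeal V I → IsTROIdeal V J → (I ≤ J ↔ θ I ≤ θ J))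
    (hinter : ∀ (m : ℕ) (Is : Fin (m + 1) → Submodule ℂ (H →L[ℂ] K)),
      (∀ i, IsTROIdeal V (Is i)) →
        mulProdIdeal m (fun i => θ (Is i)) = θ (⨅ i, Is i))
    (P : Submodule ℂ (H →L[ℂ] K)) (hP : IsTROIdeal V P) :
    IsTROPrimal V P ↔ IsCPrimal (θ P) := by
  -- θ ⊥ = ⊥
  have hθbot : θ (⊥ : Submodule ℂ (H →L[ℂ] K)) = ⊥ := by
    obtain ⟨I₀, hI₀, hθI₀⟩ := hsurj ⊥ isCIdeal_bot
    exact le_antisymm (((horder ⊥ I₀ (isTROIdeal_bot V) hI₀).mp bot_le).trans_eq hθI₀) bot_le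
  constructor
  · rintro ⟨-, hprimal⟩
    refine ⟨hmaps P hP, fun m L hL hprod => ?_⟩
    choose Is hIs hθIs using fun i => hsurj (L i) (hL i)
    have hLIs : (fun i => θ (Is i)) = L := funext hθIs
    have hθinf : θ (⨅ i, Is i) = ⊥ := by
      rw [← hinter m Is hIs, hLIs, hprod]
    have hinfbot : (⨅ i, Is i) = ⊥ := by
      refine le_antisymm ?_ bot_le
      exact (horder _ ⊥ (isTROIdeal_iInf hIs) (isTROIdeal_bot V)).mpr
        (by rw [hθinf, hθbot])
    -- build the interleaved family of TRO ideals
    set J : Fin (2 * m + 1) → Submodule ℂ (H →L[ℂ] K) :=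
      fun i => if i.1 % 2 = 0 then Is ⟨i.1 / 2, by have := i.isLt; omega⟩ else V with hJdef
    have hJideal : ∀ i, IsTROIdeal V (J i) := by
      intro i
      rw [hJdef]
      dsimp only
      split
      · exact hIs _
      · exact isTROIdeal_self hV
    have hJprod : oddProdIdeal m J = ⊥ := by
      rw [oddProdIdeal]
      have hspan : Submodule.span ℂ
          {x | ∃ a : Fin (2 * m + 1) → (H →L[ℂ] K),
            (∀ i, a i ∈ J i) ∧ x = altProd m a} = ⊥ := by
        rw [Submodule.span_eq_bot]
        rintro x ⟨a, ha, rfl⟩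
        have hmem : altProd m a ∈ ⨅ i, Is i := by
          rw [Submodule.mem_iInf]
          intro i
          have ht := altProd_mem_even hV m J hJideal a ha i.1 (by have := i.isLt; omega)
          have : J ⟨2 * i.1, by have := i.isLt; omega⟩ = Is i := by
            rw [hJdef]
            dsimp only
            rw [if_pos (by omega)]
            congr 1
            exact Fin.ext (by simp only [Fin.val_mk]; omega)
          rwa [this] at ht
        rw [hinfbot, Submodule.mem_bot] at hmem
        exact hmem
      rw [hspan]
      exact IsClosed.submodule_topologicalClosure_eq (by
        simp [Submodule.bot_coe, isClosed_singleton])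
    obtain ⟨i, hiP⟩ := hprimal m J hJideal hJprod
    by_cases hpar : i.1 % 2 = 0
    · refine ⟨⟨i.1 / 2, by have := i.isLt; omega⟩, ?_⟩
      have hJi : J i = Is ⟨i.1 / 2, by have := i.isLt; omega⟩ := by
        rw [hJdef]; dsimp only; rw [if_pos hpar]
      rw [← hθIs]
      exact (horder _ P (hIs _) hP).mp (by rw [← hJi]; exact hiP)
    · -- then V ≤ P, so every ideal is contained in P
      have hVP : V ≤ P := by
        have hJi : J i = V := by rw [hJdef]; dsimp only; rw [if_neg hpar]
        rw [← hJi]; exact hiP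
      exact ⟨0, by rw [← hθIs]; exact (horder _ P (hIs 0) hP).mp ((hIs 0).1.trans hVP)⟩
  · rintro ⟨-, hprimal⟩
    refine ⟨hP, fun n J hJ hprod => ?_⟩
    have hinfbot : (⨅ i, J i) = ⊥ := by
      refine le_antisymm ?_ bot_le
      intro a ha
      rw [Submodule.mem_iInf] at ha
      have hgen : altProd n (fun _ : Fin (2 * n + 1) => a) ∈ oddProdIdeal n J := by
        apply Submodule.le_topologicalClosure
        exact Submodule.subset_span ⟨fun _ => a, fun i => ha i, rfl⟩
      rw [hprod, Submodule.mem_bot] at hgen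
      rw [Submodule.mem_bot]
      exact eq_zero_of_altProd_const a n hgen
    have hθprod : mulProdIdeal (2 * n) (fun i => θ (J i)) = ⊥ := by
      rw [hinter (2 * n) J hJ, hinfbot, hθbot]
    obtain ⟨i, hi⟩ := hprimal (2 * n) (fun i => θ (J i)) (fun i => hmaps _ (hJ i)) hθprod
    exact ⟨i, (horder _ P (hJ i) hP).mpr hi⟩
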